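/- The function β ↦ g⁻¹(H_b(β))/β is strictly decreasing on (0,1], where g(x) = (x+1)log(x+1) − x log x and H_b is binary entropy. -/

import Mathlib

noncomputable def g (x : ℝ) : ℝ := (x + 1) * Real.log (x + 1) - x * Real.log x

noncomputable def Hb (p : ℝ) : ℝ := -(p * Real.log p) - (1 - p) * Real.log (1 - p)

open Real Set

lemma g_cont : Continuous g := by
  have h1 : Continuous fun x : ℝ => (x + 1) * Real.log (x + 1) :=
    Continuous.mul_log (by continuity)
  exact h1.sub Real.continuous_mul_log

lemma Hb_cont : Continuous Hb := by
  have h1 : Continuous fun p : ℝ => (1 - p) * Real.log (1 - p) :=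
    Continuous.mul_log (by continuity)
  exact (Real.continuous_mul_log.neg).sub h1

lemma g_hasDeriv {x : ℝ} (hx : 0 < x) :
    HasDerivAt g (Real.log (x + 1) - Real.log x) x := by
  have h1 : HasDerivAt (fun y : ℝ => (y + 1) * Real.log (y + 1)) (Real.log (x + 1) + 1) x := by
    have := (Real.hasDerivAt_mul_log (by linarith : x + 1 ≠ 0)).comp x
      ((hasDerivAt_id x).add_const 1)
    simpa [Function.comp_def] using this
  have h2 : HasDerivAt (fun y : ℝ => y * Real.log y) (Real.log x + 1) x :=
    Real.hasDerivAt_mul_log hx.ne'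
  have := h1.sub h2
  have heq : (Real.log (x + 1) + 1) - (Real.log x + 1) = Real.log (x + 1) - Real.log x := by ring
  rw [heq] at this
  exact this

lemma g_strictMono : StrictMonoOn g (Set.Ici (0:ℝ)) := by
  apply strictMonoOn_of_deriv_pos (convex_Ici 0) g_cont.continuousOn
  intro x hx
  rw [interior_Ici] at hx
  rw [(g_hasDeriv hx).deriv]
  have := Real.log_lt_log hx (by linarith : x < x + 1)
  linarith

lemma Hb_hasDeriv {β : ℝ} (h0 : 0 < β) (h1 : β < 1) :
    HasDerivAt Hb (Real.log (1 - β) - Real.log β) β := by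
  have t1 : HasDerivAt (fun b : ℝ => b * Real.log b) (Real.log β + 1) β :=
    Real.hasDerivAt_mul_log h0.ne'
  have t2 : HasDerivAt (fun b : ℝ => (1 - b) * Real.log (1 - b)) (-(Real.log (1 - β) + 1)) β := by
    have := (Real.hasDerivAt_mul_log (by linarith : (1:ℝ) - β ≠ 0)).comp β
      ((hasDerivAt_id β).const_sub 1)
    simpa [Function.comp_def] using this
  have := t1.neg.sub t2
  have heq : -(Real.log β + 1) - (-(Real.log (1 - β) + 1)) = Real.log (1 - β) - Real.log β := by
    ring
  rw [heq] at this
  exact this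

lemma Hb_pos {β : ℝ} (h0 : 0 < β) (h1 : β < 1) : 0 < Hb β := by
  have l1 : Real.log β < 0 := Real.log_neg h0 h1
  have l2 : Real.log (1 - β) < 0 := Real.log_neg (by linarith) (by linarith)
  have : β * Real.log β < 0 := mul_neg_of_pos_of_neg h0 l1
  have : (1 - β) * Real.log (1 - β) < 0 := mul_neg_of_pos_of_neg (by linarith) l2
  unfold Hb; nlinarith

lemma Hb_lt_g {β : ℝ} (h0 : 0 < β) (h1 : β ≤ 1) : Hb β < g β := by
  set r : ℝ → ℝ := fun b => (1 + b) * Real.log (1 + b) + (1 - b) * Real.log (1 - b) with hr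
  have hcont : Continuous r := by
    have c1 : Continuous fun b : ℝ => (1 + b) * Real.log (1 + b) :=
      Continuous.mul_log (by continuity)
    have c2 : Continuous fun b : ℝ => (1 - b) * Real.log (1 - b) :=
      Continuous.mul_log (by continuity)
    exact c1.add c2
  have hmono : StrictMonoOn r (Set.Icc (0:ℝ) 1) := by
    apply strictMonoOn_of_deriv_pos (convex_Icc 0 1) hcont.continuousOn
    intro x hx
    rw [interior_Icc] at hx
    obtain ⟨hxa, hxb⟩ := hx
    have d1 : HasDerivAt (fun b : ℝ => (1 + b) * Real.log (1 + b)) (Real.log (1 + x) + 1) x := by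
      have := (Real.hasDerivAt_mul_log (by linarith : (1:ℝ) + x ≠ 0)).comp x
        ((hasDerivAt_id x).const_add 1)
      simpa [Function.comp_def] using this
    have d2 : HasDerivAt (fun b : ℝ => (1 - b) * Real.log (1 - b)) (-(Real.log (1 - x) + 1)) x := by
      have := (Real.hasDerivAt_mul_log (by linarith : (1:ℝ) - x ≠ 0)).comp x
        ((hasDerivAt_id x).const_sub 1)
      simpa [Function.comp_def] using this
    have := d1.add d2
    rw [show deriv r x = _ from this.deriv]
    have := Real.log_lt_log (by linarith : (0:ℝ) < 1 - x) (by linarith : 1 - x < 1 + x)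
    linarith
  have h00 : r 0 = 0 := by simp [hr]
  have := hmono (by norm_num : (0:ℝ) ∈ Set.Icc (0:ℝ) 1) (by constructor <;> linarith) h0
  rw [h00] at this
  simp only [hr] at this
  rw [show (1:ℝ) + β = β + 1 from by ring] at this
  unfold Hb g
  linarith

lemma psi_concave {c : ℝ} (hc0 : 0 < c) (hc1 : c ≤ 1) :
    StrictConcaveOn ℝ (Set.Icc (0:ℝ) 1) (fun β => Hb β - g (c * β)) := by
  have hderiv : ∀ x ∈ Set.Ioo (0:ℝ) 1, HasDerivAt (fun β => Hb β - g (c * β))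
      ((Real.log (1 - x) - Real.log x) - (Real.log (c * x + 1) - Real.log (c * x)) * c) x := by
    intro x hx
    have hg : HasDerivAt (fun β : ℝ => g (c * β))
        ((Real.log (c * x + 1) - Real.log (c * x)) * c) x := by
      have hm : HasDerivAt (fun β : ℝ => c * β) c x := by
        simpa using (hasDerivAt_id x).const_mul c
      exact (g_hasDeriv (mul_pos hc0 hx.1)).comp x hm
    exact (Hb_hasDeriv hx.1 hx.2).sub hg
  have hcontg : Continuous fun β : ℝ => g (c * β) :=
    g_cont.comp (continuous_const.mul continuous_id)
  apply strictConcaveOn_of_deriv2_neg (convex_Icc 0 1) (Hb_cont.sub hcontg).continuousOn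
  intro x hx
  rw [interior_Icc] at hx
  obtain ⟨hxa, hxb⟩ := hx
  have hev : deriv (fun β => Hb β - g (c * β)) =ᶠ[nhds x]
      fun y => (Real.log (1 - y) - Real.log y) - (Real.log (c * y + 1) - Real.log (c * y)) * c := by
    filter_upwards [Ioo_mem_nhds hxa hxb] with y hy
    exact (hderiv y hy).deriv
  have h2 : HasDerivAt
      (fun y => (Real.log (1 - y) - Real.log y) - (Real.log (c * y + 1) - Real.log (c * y)) * c)
      ((-(1 - x)⁻¹ - x⁻¹) - ((c * x + 1)⁻¹ * c - (c * x)⁻¹ * c) * c) x := by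
    have hcx : 0 < c * x := mul_pos hc0 hxa
    have l1 : HasDerivAt (fun y : ℝ => Real.log (1 - y)) (-(1 - x)⁻¹) x := by
      have := (Real.hasDerivAt_log (by linarith : (1:ℝ) - x ≠ 0)).comp x
        ((hasDerivAt_id x).const_sub 1)
      simpa [Function.comp_def] using this
    have l2 : HasDerivAt (fun y : ℝ => Real.log (c * y + 1)) ((c * x + 1)⁻¹ * c) x := by
      have hm : HasDerivAt (fun y : ℝ => c * y + 1) c x := by
        simpa using ((hasDerivAt_id x).const_mul c).add_const 1
      exact (Real.hasDerivAt_log (by positivity : c * x + 1 ≠ 0)).comp x hm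
    have l3 : HasDerivAt (fun y : ℝ => Real.log (c * y)) ((c * x)⁻¹ * c) x := by
      have hm : HasDerivAt (fun y : ℝ => c * y) c x := by
        simpa using (hasDerivAt_id x).const_mul c
      exact (Real.hasDerivAt_log hcx.ne').comp x hm
    exact ((l1.sub (Real.hasDerivAt_log hxa.ne')).sub ((l2.sub l3).mul_const c))
  have : deriv^[2] (fun β => Hb β - g (c * β)) x
      = ((-(1 - x)⁻¹ - x⁻¹) - ((c * x + 1)⁻¹ * c - (c * x)⁻¹ * c) * c) := by
    show deriv (deriv (fun β => Hb β - g (c * β))) x = _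
    rw [Filter.EventuallyEq.deriv_eq hev, h2.deriv]
  rw [show (Hb - fun β => g (c * β)) = (fun β => Hb β - g (c * β)) from rfl, this]
  -- show the value is negative
  have hcx : 0 < c * x := mul_pos hc0 hxa
  have e1 : (c * x)⁻¹ * c * c = c / x := by
    field_simp
  have h1x : 0 < 1 - x := by linarith
  have hcx1 : 0 < c * x + 1 := by positivity
  have key : (c * x)⁻¹ * c * c ≤ x⁻¹ := by
    rw [e1, div_le_iff₀ hxa, inv_mul_cancel₀ hxa.ne']
    exact hc1
  have p1 : 0 < (1 - x)⁻¹ := inv_pos.mpr h1x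
  have p2 : 0 < (c * x + 1)⁻¹ * c * c := by positivity
  nlinarith [key, p1, p2]

theorem ginv_binEntropy_div_strictAnti (ginv : ℝ → ℝ)
    (hinv : ∀ x ∈ Set.Ici (0:ℝ), 0 ≤ ginv x ∧ g (ginv x) = x) :
    StrictAntiOn (fun β => ginv (Hb β) / β) (Set.Ioc (0:ℝ) 1) := by
  intro β1 hβ1 β2 hβ2 hlt
  obtain ⟨h1p, h1le⟩ := hβ1
  obtain ⟨h2p, h2le⟩ := hβ2
  show ginv (Hb β2) / β2 < ginv (Hb β1) / β1
  have hy1 : 0 < Hb β1 := Hb_pos h1p (lt_of_lt_of_le hlt h2le)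
  have hy2 : 0 ≤ Hb β2 := by
    rcases eq_or_lt_of_le h2le with h | h
    · simp [Hb, h]
    · exact (Hb_pos h2p h).le
  obtain ⟨hx1nn, hgx1⟩ := hinv (Hb β1) hy1.le
  obtain ⟨hx2nn, hgx2⟩ := hinv (Hb β2) hy2
  set x1 := ginv (Hb β1) with hx1d
  set x2 := ginv (Hb β2) with hx2d
  have hg0 : g 0 = 0 := by simp [g]
  have hx1pos : 0 < x1 := by
    rcases eq_or_lt_of_le hx1nn with h | h
    · exfalso; rw [← h, hg0] at hgx1; linarith
    · exact h
  rcases eq_or_lt_of_le hx2nn with h2z | h2pos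
  · rw [← h2z]
    rw [zero_div]
    positivity
  · -- main case : x2 > 0
    set c : ℝ := x2 / β2 with hc
    have hc0 : 0 < c := div_pos h2pos h2p
    have hc1 : c < 1 := by
      have hx2lt : x2 < β2 := by
        have hglt : g x2 < g β2 := by rw [hgx2]; exact Hb_lt_g h2p h2le
        exact (g_strictMono.lt_iff_lt hx2nn h2p.le).mp hglt
      rw [hc, div_lt_one h2p]
      exact hx2lt
    have hconc := psi_concave hc0 hc1.le
    have hpsi0 : Hb 0 - g (c * 0) = 0 := by simp [Hb, g]
    have hpsi2 : Hb β2 - g (c * β2) = 0 := by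
      have : c * β2 = x2 := by rw [hc, div_mul_cancel₀ x2 h2p.ne']
      rw [this, hgx2]; ring
    -- apply strict concavity at points 0 and β2 with weights
    have hkey := hconc.2 (show (0:ℝ) ∈ Set.Icc (0:ℝ) 1 by norm_num)
      (show β2 ∈ Set.Icc (0:ℝ) 1 by constructor <;> linarith)
      (show (0:ℝ) ≠ β2 by linarith)
      (show 0 < 1 - β1 / β2 by
        have : β1 / β2 < 1 := (div_lt_one h2p).mpr hlt
        linarith)
      (show 0 < β1 / β2 from div_pos h1p h2p)
      (by ring)
    have hb2 : β1 / β2 * β2 = β1 := by field_simp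
    have hH0 : Hb 0 = 0 := by simp [Hb]
    simp only [smul_eq_mul, mul_zero, zero_add, hb2, hH0, hg0, hpsi2, zero_sub, neg_zero,
      add_zero] at hkey
    -- hkey : 0 < Hb β1 - g (c * β1)
    have hglt : g (c * β1) < g x1 := by
      rw [hgx1]; linarith
    have hlt2 : c * β1 < x1 :=
      (g_strictMono.lt_iff_lt (Set.mem_Ici.mpr (by positivity)) (Set.mem_Ici.mpr hx1nn)).mp hglt
    rw [div_lt_div_iff₀ h2p h1p]
    calc x2 * β1 = c * β1 * β2 := by rw [hc]; field_simp
    _ < x1 * β2 := by nlinarith
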